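/- In a (d_v, d_c)-regular bipartite graph with girth at least 8, the number of closed cycle-free walks of length 6 from a fixed variable node to itself equals d_v(d_v^2 + 2d_v(d_c−1) + (d_v−1)(d_c−1) + (d_c−1)^2). -/

import Mathlib

open SimpleGraph

def cycleFree {V : Type*} {G : SimpleGraph V} {u v : V} (w : G.Walk u v) : Prop :=
  (SimpleGraph.fromEdgeSet {e | e ∈ w.edges}).IsAcyclic

namespace Stmt10Aux

variable {V : Type*} {G : SimpleGraph V}

lemma cycle_length_8 (hg : (8 : ℕ∞) ≤ G.girth) :
    ∀ (a : V) (w : G.Walk a a), w.IsCycle → 8 ≤ w.length := by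
  intro a w hw
  have h8 : 8 ≤ G.girth := by exact_mod_cast hg
  have hle : G.egirth ≤ w.length := by
    calc G.egirth ≤ ⨅ w' : G.Walk a a, ⨅ _ : w'.IsCycle, (w'.length : ℕ∞) := iInf_le _ a
    _ ≤ ⨅ _ : w.IsCycle, (w.length : ℕ∞) := iInf_le _ w
    _ ≤ (w.length : ℕ∞) := iInf_le _ hw
  have := ENat.toNat_le_toNat hle (by simp)
  simpa [SimpleGraph.girth] using h8.trans this

lemma no4 (hg : (8 : ℕ∞) ≤ G.girth) {a b c d : V}
    (h1 : G.Adj a b) (h2 : G.Adj b c) (h3 : G.Adj c d) (h4 : G.Adj d a)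
    (hac : a ≠ c) (hbd : b ≠ d) : False := by
  let w : G.Walk a a := .cons h1 (.cons h2 (.cons h3 (.cons h4 .nil)))
  have n1 := h1.ne; have n2 := h2.ne; have n3 := h3.ne; have n4 := h4.ne
  have hcyc : w.IsCycle := by
    rw [Walk.isCycle_def, Walk.isTrail_def]
    refine ⟨?_, by simp [w], ?_⟩ <;>
      simp [w, List.nodup_cons, Sym2.eq, Sym2.rel_iff'] <;> push_neg <;> tauto
  have := cycle_length_8 hg a w hcyc
  simp [w] at this

lemma no6 (hg : (8 : ℕ∞) ≤ G.girth) {a b c d e f : V}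
    (h1 : G.Adj a b) (h2 : G.Adj b c) (h3 : G.Adj c d) (h4 : G.Adj d e)
    (h5 : G.Adj e f) (h6 : G.Adj f a)
    (hac : a ≠ c) (had : a ≠ d) (hae : a ≠ e) (hbd : b ≠ d) (hbe : b ≠ e)
    (hbf : b ≠ f) (hce : c ≠ e) (hcf : c ≠ f) (hdf : d ≠ f) : False := by
  let w : G.Walk a a := .cons h1 (.cons h2 (.cons h3 (.cons h4 (.cons h5 (.cons h6 .nil)))))
  have n1 := h1.ne; have n2 := h2.ne; have n3 := h3.ne
  have n4 := h4.ne; have n5 := h5.ne; have n6 := h6.ne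
  have hcyc : w.IsCycle := by
    rw [Walk.isCycle_def, Walk.isTrail_def]
    refine ⟨?_, by simp [w], ?_⟩ <;>
      simp [w, List.nodup_cons, Sym2.eq, Sym2.rel_iff'] <;> push_neg <;> tauto
  have := cycle_length_8 hg a w hcyc
  simp [w] at this

lemma cycleFree_of_short (hg : (8 : ℕ∞) ≤ G.girth) {x y : V} (w : G.Walk x y)
    (hl : w.length ≤ 7) : cycleFree w := by
  intro v c hc
  have hle : SimpleGraph.fromEdgeSet {e | e ∈ w.edges} ≤ G := by
    intro p q hpq
    rw [fromEdgeSet_adj] at hpq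
    exact (Walk.edges_subset_edgeSet w hpq.1 : _)
  have hc' : (c.mapLe hle).IsCycle := hc.mapLe hle
  have h8 := cycle_length_8 hg v (c.mapLe hle) hc'
  have hlen : (c.mapLe hle).length = c.length := by simp
  classical
  have hnodup : c.edges.Nodup := hc.isTrail.edges_nodup
  have hsub : c.edges.toFinset ⊆ w.edges.toFinset := by
    intro e he
    rw [List.mem_toFinset] at he ⊢
    have h2 := Walk.edges_subset_edgeSet c he
    rw [SimpleGraph.edgeSet_fromEdgeSet] at h2
    exact h2.1
  have hclen : c.length ≤ 7 := by
    have e1 : c.edges.toFinset.card = c.edges.length := List.toFinset_card_of_nodup hnodup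
    have e2 : w.edges.toFinset.card ≤ w.edges.length := w.edges.toFinset_card_le
    have := Finset.card_le_card hsub
    rw [e1] at this
    simp only [Walk.length_edges] at *
    omega
  omega

def chainProp (G : SimpleGraph V) (u : V) (p : V × V × V × V × V) : Prop :=
  G.Adj u p.1 ∧ G.Adj p.1 p.2.1 ∧ G.Adj p.2.1 p.2.2.1 ∧ G.Adj p.2.2.1 p.2.2.2.1 ∧
    G.Adj p.2.2.2.1 p.2.2.2.2 ∧ G.Adj p.2.2.2.2 u

instance {u : V} [DecidableRel G.Adj] : DecidablePred (chainProp G u) :=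
  fun p => inferInstanceAs (Decidable (G.Adj u p.1 ∧ G.Adj p.1 p.2.1 ∧ G.Adj p.2.1 p.2.2.1 ∧
    G.Adj p.2.2.1 p.2.2.2.1 ∧ G.Adj p.2.2.2.1 p.2.2.2.2 ∧ G.Adj p.2.2.2.2 u))

def chainToWalk (u : V) (p : V × V × V × V × V) (h : chainProp G u p) : G.Walk u u :=
  .cons h.1 (.cons h.2.1 (.cons h.2.2.1 (.cons h.2.2.2.1 (.cons h.2.2.2.2.1
    (.cons h.2.2.2.2.2 .nil)))))

lemma chainToWalk_length (u : V) (p : V × V × V × V × V) (h : chainProp G u p) :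
    (chainToWalk u p h).length = 6 := by simp [chainToWalk]

lemma card_walks (hg : (8 : ℕ∞) ≤ G.girth) (u : V) :
    Nat.card {w : G.Walk u u // w.length = 6 ∧ cycleFree w} =
      Nat.card {p : V × V × V × V × V // chainProp G u p} := by
  refine (Nat.card_eq_of_bijective
    (fun q => ⟨chainToWalk u q.1 q.2, chainToWalk_length u q.1 q.2,
      cycleFree_of_short hg _ (by rw [chainToWalk_length]; norm_num)⟩) ⟨?_, ?_⟩).symm
  · rintro ⟨p, hp⟩ ⟨q, hq⟩ h
    simp only [Subtype.mk.injEq] at h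
    have := congrArg Walk.support h
    simp only [chainToWalk, Walk.support_cons, Walk.support_nil] at this
    obtain ⟨p1,p2,p3,p4,p5⟩ := p
    obtain ⟨q1,q2,q3,q4,q5⟩ := q
    simp_all
  · rintro ⟨w, hw6, hcf⟩
    cases w with
    | nil => simp at hw6
    | cons h1 p1 =>
      cases p1 with
      | nil => simp at hw6
      | cons h2 p2 =>
        cases p2 with
        | nil => simp at hw6
        | cons h3 p3 =>
          cases p3 with
          | nil => simp at hw6
          | cons h4 p4 =>
            cases p4 with
            | nil => simp at hw6
            | cons h5 p5 =>
              cases p5 with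
              | nil => simp at hw6
              | cons h6 p6 =>
                cases p6 with
                | cons h7 p7 => simp [Walk.length_cons] at hw6
                | nil =>
                  exact ⟨⟨(_, _, _, _, _), h1, h2, h3, h4, h5, h6⟩, Subtype.ext rfl⟩

end Stmt10Aux

open Stmt10Aux


theorem stmt10 {V : Type*} [Fintype V] [DecidableEq V] (G : SimpleGraph V)
    [DecidableRel G.Adj] (U : Set V) [DecidablePred (· ∈ U)] (dv dc : ℕ)
    (hbip : ∀ a b : V, G.Adj a b → (a ∈ U ↔ b ∉ U))
    (hdv : ∀ v ∈ U, G.degree v = dv) (hdc : ∀ v : V, v ∉ U → G.degree v = dc)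
    (hg : (8 : ℕ∞) ≤ G.girth) (u : V) (hu : u ∈ U) :
    Nat.card {w : G.Walk u u // w.length = 6 ∧ cycleFree w} =
      dv * (dv ^ 2 + 2 * dv * (dc - 1) + (dv - 1) * (dc - 1) + (dc - 1) ^ 2) := by
  classical
  rw [card_walks hg u, Nat.card_eq_fintype_card, Fintype.card_subtype]
  set Nf := G.neighborFinset with hNf
  have hmem : ∀ x y : V, y ∈ Nf x ↔ G.Adj x y := fun x y => G.mem_neighborFinset x y
  have hNu : (Nf u).card = dv := hdv u hu
  have haU : ∀ a : V, G.Adj u a → a ∉ U := fun a h => (hbip u a h).mp hu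
  have hbU : ∀ a b : V, G.Adj u a → G.Adj a b → b ∈ U := by
    intro a b h1 h2
    by_contra hb
    exact haU a h1 ((hbip a b h2).mpr hb)
  have hNa : ∀ a : V, G.Adj u a → ((Nf a).erase u).card = dc - 1 := by
    intro a h
    rw [Finset.card_erase_of_mem ((hmem a u).mpr h.symm)]
    rw [show (Nf a).card = G.degree a from rfl, hdc a (haU a h)]
  have hNb : ∀ a b : V, G.Adj u a → G.Adj a b → ((Nf b).erase a).card = dv - 1 := by
    intro a b h1 h2
    rw [Finset.card_erase_of_mem ((hmem b a).mpr h2.symm)]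
    rw [show (Nf b).card = G.degree b from rfl, hdv b (hbU a b h1 h2)]
  have hsumA : ∑ c ∈ Nf u, ((Nf c).erase u).card = dv * (dc - 1) := by
    calc ∑ c ∈ Nf u, ((Nf c).erase u).card = ∑ _c ∈ Nf u, (dc - 1) :=
          Finset.sum_congr rfl (fun c hc => hNa c ((hmem u c).mp hc))
    _ = dv * (dc - 1) := by rw [Finset.sum_const, smul_eq_mul, hNu]
  set F : Finset (V × V × V × V × V) := Finset.univ.filter (chainProp G u) with hF
  set s1 := (F.filter (fun p => p.2.1 = u)).filter (fun p => p.2.2.2.1 = u) with hs1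
  set s2 := (F.filter (fun p => p.2.1 = u)).filter (fun p => ¬p.2.2.2.1 = u) with hs2
  set s3 := ((F.filter (fun p => ¬p.2.1 = u)).filter (fun p => p.2.2.2.1 = u)) with hs3
  set B' := ((F.filter (fun p => ¬p.2.1 = u)).filter (fun p => ¬p.2.2.2.1 = u)) with hB'
  set s4 := B'.filter (fun p => p.2.2.1 = p.1) with hs4
  set s5 := B'.filter (fun p => ¬p.2.2.1 = p.1) with hs5
  have e0 : (F.filter (fun p => p.2.1 = u)).card + (F.filter (fun p => ¬p.2.1 = u)).card
      = F.card := Finset.card_filter_add_card_filter_not _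
  have e1 : s1.card + s2.card = (F.filter (fun p => p.2.1 = u)).card :=
    Finset.card_filter_add_card_filter_not _
  have e2 : s3.card + B'.card = (F.filter (fun p => ¬p.2.1 = u)).card :=
    Finset.card_filter_add_card_filter_not _
  have e3 : s4.card + s5.card = B'.card :=
    Finset.card_filter_add_card_filter_not _
  -- case 1
  have hc1 : s1.card = dv * (dv * dv) := by
    have ht : ((Nf u) ×ˢ ((Nf u) ×ˢ (Nf u))).card = dv * (dv * dv) := by
      simp [Finset.card_product, hNu]
    rw [← ht]
    refine Finset.card_nbij' (fun p => (p.1, p.2.2.1, p.2.2.2.2))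
      (fun q => (q.1, u, q.2.1, u, q.2.2)) ?_ ?_ ?_ ?_
    · rintro ⟨a,b,c,d,e⟩ hp
      simp only [Finset.mem_coe, hs1, hF, Finset.mem_filter, Finset.mem_univ, true_and, chainProp] at hp
      obtain ⟨⟨⟨h1,h2,h3,h4,h5,h6⟩, hb⟩, hd⟩ := hp
      subst hb; subst hd
      simp [Finset.mem_product, hmem, h1, h3, h5]
    · rintro ⟨a,c,e⟩ hq
      simp only [Finset.mem_coe, Finset.mem_product, hmem] at hq
      obtain ⟨h1, h2, h3⟩ := hq
      simp only [Finset.mem_coe, hs1, hF, Finset.mem_filter, Finset.mem_univ, true_and, chainProp]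
      exact ⟨⟨⟨h1, h1.symm, h2, h2.symm, h3, h3.symm⟩, trivial⟩, trivial⟩
    · rintro ⟨a,b,c,d,e⟩ hp
      simp only [Finset.mem_coe, hs1, hF, Finset.mem_filter] at hp
      obtain ⟨⟨-, hb⟩, hd⟩ := hp
      simp [hb, hd]
    · rintro ⟨a,c,e⟩ _; rfl
  -- case 2
  have hc2 : s2.card = dv * (dv * (dc - 1)) := by
    have ht : ((Nf u) ×ˢ ((Nf u).sigma (fun c => (Nf c).erase u))).card
        = dv * (dv * (dc - 1)) := by
      rw [Finset.card_product, Finset.card_sigma, hNu, hsumA]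
    rw [← ht]
    refine Finset.card_nbij' (fun p => (p.1, ⟨p.2.2.1, p.2.2.2.1⟩))
      (fun q => (q.1, u, q.2.1, q.2.2, q.2.1)) ?_ ?_ ?_ ?_
    · rintro ⟨a,b,c,d,e⟩ hp
      simp only [Finset.mem_coe, hs2, hF, Finset.mem_filter, Finset.mem_univ, true_and, chainProp] at hp
      obtain ⟨⟨⟨h1,h2,h3,h4,h5,h6⟩, hb⟩, hd⟩ := hp
      subst hb
      simp [Finset.mem_product, Finset.mem_sigma, Finset.mem_erase, hmem, h3, h4, h1, hd]
    · rintro ⟨a,⟨c,d⟩⟩ hq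
      simp only [Finset.mem_coe, Finset.mem_product, Finset.mem_sigma, Finset.mem_erase, hmem] at hq
      obtain ⟨h1, ⟨h2, hd, h3⟩⟩ := hq
      simp only [Finset.mem_coe, hs2, hF, Finset.mem_filter, Finset.mem_univ, true_and, chainProp]
      exact ⟨⟨⟨h1, h1.symm, h2, h3, h3.symm, h2.symm⟩, trivial⟩, hd⟩
    · rintro ⟨a,b,c,d,e⟩ hp
      simp only [Finset.mem_coe, hs2, hF, Finset.mem_filter, Finset.mem_univ, true_and, chainProp] at hp
      obtain ⟨⟨⟨h1,h2,h3,h4,h5,h6⟩, hb⟩, hd⟩ := hp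
      subst hb
      have hec : e = c := by
        by_contra hec
        exact no4 hg h3 h4 h5 h6 (fun h => hd h.symm) (fun h => hec h.symm)
      simp [hec]
    · rintro ⟨a,⟨c,d⟩⟩ _; rfl
  -- case 3
  have hc3 : s3.card = dv * (dc - 1) * dv := by
    have ht : (((Nf u).sigma (fun a => (Nf a).erase u)) ×ˢ (Nf u)).card
        = dv * (dc - 1) * dv := by
      rw [Finset.card_product, Finset.card_sigma, hsumA, hNu]
    rw [← ht]
    refine Finset.card_nbij' (fun p => (⟨p.1, p.2.1⟩, p.2.2.2.2))
      (fun q => (q.1.1, q.1.2, q.1.1, u, q.2)) ?_ ?_ ?_ ?_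
    · rintro ⟨a,b,c,d,e⟩ hp
      simp only [Finset.mem_coe, hs3, hF, Finset.mem_filter, Finset.mem_univ, true_and, chainProp] at hp
      obtain ⟨⟨⟨h1,h2,h3,h4,h5,h6⟩, hb⟩, hd⟩ := hp
      subst hd
      simp [Finset.mem_product, Finset.mem_sigma, Finset.mem_erase, hmem, h1, h2, h6.symm, hb]
    · rintro ⟨⟨a,b⟩,e⟩ hq
      simp only [Finset.mem_coe, Finset.mem_product, Finset.mem_sigma, Finset.mem_erase, hmem] at hq
      obtain ⟨⟨h1, hb, h2⟩, h3⟩ := hq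
      simp only [Finset.mem_coe, hs3, hF, Finset.mem_filter, Finset.mem_univ, true_and, chainProp]
      exact ⟨⟨⟨h1, h2, h2.symm, h1.symm, h3, h3.symm⟩, hb⟩, trivial⟩
    · rintro ⟨a,b,c,d,e⟩ hp
      simp only [Finset.mem_coe, hs3, hF, Finset.mem_filter, Finset.mem_univ, true_and, chainProp] at hp
      obtain ⟨⟨⟨h1,h2,h3,h4,h5,h6⟩, hb⟩, hd⟩ := hp
      subst hd
      have hca : c = a := by
        by_contra hca
        exact no4 hg h1 h2 h3 h4 (fun h => hb h.symm) (fun h => hca h.symm)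
      simp [hca]
    · rintro ⟨⟨a,b⟩,e⟩ _; rfl
  -- case 4
  have hc4 : s4.card = dv * ((dc - 1) * (dc - 1)) := by
    have ht : ((Nf u).sigma (fun a => ((Nf a).erase u) ×ˢ ((Nf a).erase u))).card
        = dv * ((dc - 1) * (dc - 1)) := by
      rw [Finset.card_sigma]
      calc ∑ a ∈ Nf u, (((Nf a).erase u) ×ˢ ((Nf a).erase u)).card
          = ∑ _a ∈ Nf u, ((dc - 1) * (dc - 1)) := Finset.sum_congr rfl (fun a ha => by
            rw [Finset.card_product, hNa a ((hmem u a).mp ha)])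
      _ = dv * ((dc - 1) * (dc - 1)) := by rw [Finset.sum_const, smul_eq_mul, hNu]
    rw [← ht]
    refine Finset.card_nbij' (fun p => ⟨p.1, (p.2.1, p.2.2.2.1)⟩)
      (fun q => (q.1, q.2.1, q.1, q.2.2, q.1)) ?_ ?_ ?_ ?_
    · rintro ⟨a,b,c,d,e⟩ hp
      simp only [Finset.mem_coe, hs4, hB', hF, Finset.mem_filter, Finset.mem_univ, true_and, chainProp] at hp
      obtain ⟨⟨⟨⟨h1,h2,h3,h4,h5,h6⟩, hb⟩, hd⟩, hc⟩ := hp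
      subst hc
      simp [Finset.mem_product, Finset.mem_sigma, Finset.mem_erase, hmem, h1, h2, h4, hb, hd]
    · rintro ⟨a,⟨b,d⟩⟩ hq
      simp only [Finset.mem_coe, Finset.mem_sigma, Finset.mem_product, Finset.mem_erase, hmem] at hq
      obtain ⟨h1, ⟨hb, h2⟩, ⟨hd, h3⟩⟩ := hq
      simp only [Finset.mem_coe, hs4, hB', hF, Finset.mem_filter, Finset.mem_univ, true_and, chainProp]
      exact ⟨⟨⟨⟨h1, h2, h2.symm, h3, h3.symm, h1.symm⟩, hb⟩, hd⟩, trivial⟩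
    · rintro ⟨a,b,c,d,e⟩ hp
      simp only [Finset.mem_coe, hs4, hB', hF, Finset.mem_filter, Finset.mem_univ, true_and, chainProp] at hp
      obtain ⟨⟨⟨⟨h1,h2,h3,h4,h5,h6⟩, hb⟩, hd⟩, hc⟩ := hp
      subst hc
      have hec : e = c := by
        by_contra hec
        exact no4 hg h1 h4 h5 h6 (fun h => hd h.symm) (fun h => hec h.symm)
      simp [hec]
    · rintro ⟨a,⟨b,d⟩⟩ _; rfl
  -- case 5
  have hc5 : s5.card = dv * ((dc - 1) * (dv - 1)) := by
    have ht : ((Nf u).sigma (fun a => ((Nf a).erase u).sigma (fun b => (Nf b).erase a))).card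
        = dv * ((dc - 1) * (dv - 1)) := by
      rw [Finset.card_sigma]
      calc ∑ a ∈ Nf u, (((Nf a).erase u).sigma (fun b => (Nf b).erase a)).card
          = ∑ _a ∈ Nf u, ((dc - 1) * (dv - 1)) := Finset.sum_congr rfl (fun a ha => by
            have h1 : G.Adj u a := (hmem u a).mp ha
            rw [Finset.card_sigma]
            calc ∑ b ∈ (Nf a).erase u, ((Nf b).erase a).card
                = ∑ _b ∈ (Nf a).erase u, (dv - 1) := Finset.sum_congr rfl (fun b hb =>
                  hNb a b h1 ((hmem a b).mp (Finset.mem_of_mem_erase hb)))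
            _ = (dc - 1) * (dv - 1) := by rw [Finset.sum_const, smul_eq_mul, hNa a h1])
      _ = dv * ((dc - 1) * (dv - 1)) := by rw [Finset.sum_const, smul_eq_mul, hNu]
    rw [← ht]
    refine Finset.card_nbij' (fun p => ⟨p.1, ⟨p.2.1, p.2.2.1⟩⟩)
      (fun q => (q.1, q.2.1, q.2.2, q.2.1, q.1)) ?_ ?_ ?_ ?_
    · rintro ⟨a,b,c,d,e⟩ hp
      simp only [Finset.mem_coe, hs5, hB', hF, Finset.mem_filter, Finset.mem_univ, true_and, chainProp] at hp
      obtain ⟨⟨⟨⟨h1,h2,h3,h4,h5,h6⟩, hb⟩, hd⟩, hc⟩ := hp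
      simp [Finset.mem_sigma, Finset.mem_erase, hmem, h1, h2, h3, hb, hc]
    · rintro ⟨a,⟨b,c⟩⟩ hq
      simp only [Finset.mem_coe, Finset.mem_sigma, Finset.mem_erase, hmem] at hq
      obtain ⟨h1, ⟨hb, h2⟩, ⟨hc, h3⟩⟩ := hq
      simp only [Finset.mem_coe, hs5, hB', hF, Finset.mem_filter, Finset.mem_univ, true_and, chainProp]
      exact ⟨⟨⟨⟨h1, h2, h3, h3.symm, h2.symm, h1.symm⟩, hb⟩, hb⟩, hc⟩
    · rintro ⟨a,b,c,d,e⟩ hp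
      simp only [Finset.mem_coe, hs5, hB', hF, Finset.mem_filter, Finset.mem_univ, true_and, chainProp] at hp
      obtain ⟨⟨⟨⟨h1,h2,h3,h4,h5,h6⟩, hb⟩, hd⟩, hc⟩ := hp
      have hauU : a ∉ U := haU a h1
      have hbUU : b ∈ U := hbU a b h1 h2
      have hcU : c ∉ U := (hbip b c h3).mp hbUU
      have hdU : d ∈ U := not_not.mp (fun hd' => hcU ((hbip c d h4).mpr hd'))
      have heU : e ∉ U := (hbip d e h5).mp hdU
      have hub : u ≠ b := fun h => hb h.symm
      have huc : u ≠ c := fun h => hcU (h ▸ hu)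
      have hud : u ≠ d := fun h => hd h.symm
      have hacx : a ≠ c := fun h => hc h.symm
      have hadx : a ≠ d := fun h => hauU (by rw [h]; exact hdU)
      have hdb : d = b := by
        by_contra hdb
        by_cases hec : e = c
        · exact no4 hg h1 h2 h3 (hec ▸ h6) hub hacx
        · by_cases hea : e = a
          · exact no4 hg h2 h3 h4 (hea ▸ h5) hacx (fun h => hdb h.symm)
          · have hbex : b ≠ e := fun h => heU (h ▸ hbUU)
            have hcex : c ≠ e := fun h => hec h.symm
            exact no6 hg h1 h2 h3 h4 h5 h6 hub huc hud hacx hadx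
              (fun h => hea h.symm) (fun h => hdb h.symm) hbex hcex
      have hea : e = a := by
        by_contra hea
        exact no4 hg h1 h2 (hdb ▸ h5) h6 hub (fun h => hea h.symm)
      simp [hdb, hea]
    · rintro ⟨a,⟨b,c⟩⟩ _; rfl
  have : F.card = s1.card + s2.card + (s3.card + (s4.card + s5.card)) := by omega
  rw [this, hc1, hc2, hc3, hc4, hc5]
  generalize dc - 1 = x
  generalize dv - 1 = y
  ring
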